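/- For every integer n ≥ 2, every real p with n + p > 2, and every y ∈ ℝⁿ with Q(y) > 0, the Gaussian improper-mixture intensity has the closed form Λ_{n,p}(y) = Γ((n+p−2)/2) · 2^{(p−3)/2} · π^{−(n−1)/2} · n^{−1/2} / Q(y)^{(n+p−2)/2}; in particular Λ_{n,p}(y) is finite. -/

import Mathlib

open MeasureTheory
open scoped ENNReal

/-- `Q(y) = ∑ᵢ (yᵢ - ȳ)²` where `ȳ` is the mean of the coordinates. -/
noncomputable def Qstat (n : ℕ) (y : Fin n → ℝ) : ℝ :=
  ∑ i, (y i - (∑ j, y j) / n) ^ 2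

/-- The Gaussian improper-mixture intensity
`Λ_{n,p}(y) = ∫₀^∞ ∫_{-∞}^∞ (2πσ²)^{-n/2} exp(-∑ᵢ(yᵢ-θ)²/(2σ²)) σ^{-p} dθ dσ`,
with values in `[0, ∞]`. -/
noncomputable def gaussIntensity (n : ℕ) (p : ℝ) (y : Fin n → ℝ) : ℝ≥0∞ :=
  ∫⁻ σ in Set.Ioi (0 : ℝ), ∫⁻ θ : ℝ,
    ENNReal.ofReal ((2 * Real.pi * σ ^ 2) ^ (-(n : ℝ) / 2) *
      Real.exp (-(∑ i, (y i - θ) ^ 2) / (2 * σ ^ 2)) * σ ^ (-p))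

lemma sum_sq_shift (n : ℕ) (hn : 0 < n) (y : Fin n → ℝ) (θ : ℝ) :
    ∑ i, (y i - θ) ^ 2 = Qstat n y + n * (θ - (∑ j, y j) / n) ^ 2 := by
  have hn0 : (n : ℝ) ≠ 0 := by
    exact_mod_cast Nat.pos_iff_ne_zero.mp hn
  set m : ℝ := (∑ j, y j) / n with hm
  have hsum0 : ∑ i, (y i - m) = 0 := by
    rw [Finset.sum_sub_distrib, Finset.sum_const, Finset.card_univ, Fintype.card_fin,
      nsmul_eq_mul, hm]
    field_simp
    ring
  have expand : ∀ i : Fin n, (y i - θ) ^ 2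
      = (y i - m) ^ 2 + ((y i - m) * (2 * (m - θ)) + (m - θ) ^ 2) := fun i => by ring
  calc ∑ i, (y i - θ) ^ 2
      = ∑ i, ((y i - m) ^ 2 + ((y i - m) * (2 * (m - θ)) + (m - θ) ^ 2)) :=
        Finset.sum_congr rfl fun i _ => expand i
    _ = (∑ i, (y i - m) ^ 2) + ((∑ i, (y i - m)) * (2 * (m - θ)) + n * (m - θ) ^ 2) := by
        rw [Finset.sum_add_distrib, Finset.sum_add_distrib, ← Finset.sum_mul,
          Finset.sum_const, Finset.card_univ, Fintype.card_fin, nsmul_eq_mul]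
    _ = Qstat n y + n * (θ - m) ^ 2 := by
        rw [hsum0, Qstat]; ring

theorem gaussIntensity_closed_form (n : ℕ) (hn : 2 ≤ n) (p : ℝ)
    (hp : 2 < (n : ℝ) + p) (y : Fin n → ℝ) (hQ : 0 < Qstat n y) :
    gaussIntensity n p y =
      ENNReal.ofReal (Real.Gamma (((n : ℝ) + p - 2) / 2) * (2 : ℝ) ^ ((p - 3) / 2) *
        Real.pi ^ (-((n : ℝ) - 1) / 2) * (n : ℝ) ^ (-(1 : ℝ) / 2) /
          Qstat n y ^ (((n : ℝ) + p - 2) / 2)) ∧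
    gaussIntensity n p y < ⊤ := by
  have hnpos : 0 < n := lt_of_lt_of_le (by norm_num) hn
  have hnR : (0 : ℝ) < n := by exact_mod_cast hnpos
  have hπ : (0 : ℝ) < Real.pi := Real.pi_pos
  set Q : ℝ := Qstat n y with hQdef
  set m : ℝ := (∑ j, y j) / n with hmdef
  set K : ℝ := (2 * Real.pi) ^ (-((n : ℝ) - 1) / 2) * (n : ℝ) ^ (-(1 : ℝ) / 2) with hKdef
  set h : ℝ → ℝ := fun σ => σ ^ (1 - (n : ℝ) - p) * Real.exp (-(Q / 2) * σ ^ (-2 : ℝ))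
    with hhdef
  set f : ℝ → ℝ := fun u => u ^ ((n : ℝ) + p - 3) * Real.exp (-(Q / 2) * u ^ 2) with hfdef
  have hQ2 : (0 : ℝ) < Q / 2 := by linarith
  have hs : (-1 : ℝ) < (n : ℝ) + p - 3 := by linarith
  have hΓ : 0 < Real.Gamma (((n : ℝ) + p - 2) / 2) :=
    Real.Gamma_pos_of_pos (by linarith)
  -- integrability of f on Ioi 0
  have hf_int : IntegrableOn f (Set.Ioi 0) :=
    (integrable_rpow_mul_exp_neg_mul_sq hQ2 hs).integrableOn
  -- value of ∫ f
  have hf_val : ∫ u in Set.Ioi (0 : ℝ), f u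
      = (Q / 2) ^ (-((n : ℝ) + p - 2) / 2) * (1 / 2) *
        Real.Gamma (((n : ℝ) + p - 2) / 2) := by
    have e : ∫ u in Set.Ioi (0 : ℝ), f u
        = ∫ u in Set.Ioi (0 : ℝ), u ^ ((n : ℝ) + p - 3) * Real.exp (-(Q / 2) * u ^ (2 : ℝ)) := by
      refine setIntegral_congr_fun measurableSet_Ioi fun u hu => ?_
      rw [hfdef]
      norm_num [Real.rpow_two]
    rw [e, integral_rpow_mul_exp_neg_mul_rpow (by norm_num) hs hQ2,
      show (-((n : ℝ) + p - 3 + 1) / 2 : ℝ) = -((n : ℝ) + p - 2) / 2 by ring,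
      show (((n : ℝ) + p - 3 + 1) / 2 : ℝ) = ((n : ℝ) + p - 2) / 2 by ring]
  -- relation between h and f via substitution x ↦ x⁻¹
  have hcomp : ∀ x ∈ Set.Ioi (0 : ℝ),
      (|(-1 : ℝ)| * x ^ ((-1 : ℝ) - 1)) • f (x ^ (-1 : ℝ)) = h x := by
    intro x hx
    have hx0 : (0 : ℝ) < x := hx
    rw [hfdef, hhdef]
    simp only [smul_eq_mul, abs_neg, abs_one, one_mul]
    have h1 : (x ^ (-1 : ℝ)) ^ ((n : ℝ) + p - 3) = x ^ (-((n : ℝ) + p - 3)) := by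
      rw [← Real.rpow_mul hx0.le]; ring_nf
    have h2 : (x ^ (-1 : ℝ)) ^ 2 = x ^ (-2 : ℝ) := by
      rw [← Real.rpow_two, ← Real.rpow_mul hx0.le]; norm_num
    rw [h1, h2, ← mul_assoc, mul_comm (x ^ ((-1 : ℝ) - 1)) (x ^ (-((n : ℝ) + p - 3))),
      ← Real.rpow_add hx0]
    ring_nf
  have hh_int : IntegrableOn h (Set.Ioi 0) := by
    have := (integrableOn_Ioi_comp_rpow_iff f (p := -1) (by norm_num)).mpr hf_int
    exact this.congr_fun hcomp measurableSet_Ioi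
  have hh_val : ∫ σ in Set.Ioi (0 : ℝ), h σ = ∫ u in Set.Ioi (0 : ℝ), f u := by
    rw [← integral_comp_rpow_Ioi f (p := -1) (by norm_num)]
    exact (setIntegral_congr_fun measurableSet_Ioi hcomp).symm
  -- step 1: inner integral
  have inner_eq : ∀ σ ∈ Set.Ioi (0 : ℝ),
      (∫⁻ θ : ℝ, ENNReal.ofReal ((2 * Real.pi * σ ^ 2) ^ (-(n : ℝ) / 2) *
        Real.exp (-(∑ i, (y i - θ) ^ 2) / (2 * σ ^ 2)) * σ ^ (-p)))
      = ENNReal.ofReal (K * h σ) := by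
    intro σ hσ
    have hσ0 : (0 : ℝ) < σ := hσ
    have hσ2 : (0 : ℝ) < σ ^ 2 := by positivity
    have h2π : (0 : ℝ) < 2 * Real.pi := by positivity
    set b : ℝ := (n : ℝ) / (2 * σ ^ 2) with hbdef
    have hb : 0 < b := by positivity
    set A : ℝ := (2 * Real.pi * σ ^ 2) ^ (-(n : ℝ) / 2) * σ ^ (-p) *
      Real.exp (-Q / (2 * σ ^ 2)) with hAdef
    have hA : 0 < A := by rw [hAdef]; positivity
    have ptwise : ∀ θ : ℝ, (2 * Real.pi * σ ^ 2) ^ (-(n : ℝ) / 2) *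
        Real.exp (-(∑ i, (y i - θ) ^ 2) / (2 * σ ^ 2)) * σ ^ (-p)
        = A * Real.exp (-b * (θ - m) ^ 2) := by
      intro θ
      rw [sum_sq_shift n hnpos y θ, ← hQdef, ← hmdef]
      have e : Real.exp (-(Q + n * (θ - m) ^ 2) / (2 * σ ^ 2))
          = Real.exp (-Q / (2 * σ ^ 2)) * Real.exp (-b * (θ - m) ^ 2) := by
        rw [← Real.exp_add]
        congr 1
        rw [hbdef]
        field_simp
        ring
      rw [e, hAdef]; ring
    have int1 : Integrable (fun θ : ℝ => A * Real.exp (-b * (θ - m) ^ 2)) :=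
      ((integrable_exp_neg_mul_sq hb).comp_sub_right m).const_mul A
    calc (∫⁻ θ : ℝ, ENNReal.ofReal ((2 * Real.pi * σ ^ 2) ^ (-(n : ℝ) / 2) *
          Real.exp (-(∑ i, (y i - θ) ^ 2) / (2 * σ ^ 2)) * σ ^ (-p)))
        = ∫⁻ θ : ℝ, ENNReal.ofReal (A * Real.exp (-b * (θ - m) ^ 2)) := by
          simp_rw [ptwise]
      _ = ENNReal.ofReal (∫ θ : ℝ, A * Real.exp (-b * (θ - m) ^ 2)) := by
          rw [← ofReal_integral_eq_lintegral_ofReal int1]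
          exact Filter.Eventually.of_forall fun θ => by positivity
      _ = ENNReal.ofReal (A * Real.sqrt (Real.pi / b)) := by
          rw [integral_const_mul]
          congr 1
          have e : ∫ θ : ℝ, Real.exp (-b * (θ - m) ^ 2) = ∫ θ : ℝ, Real.exp (-b * θ ^ 2) :=
            integral_sub_right_eq_self (fun θ : ℝ => Real.exp (-b * θ ^ 2)) m
          rw [e, integral_gaussian b]
      _ = ENNReal.ofReal (K * h σ) := by
          congr 1
          show (2 * Real.pi * σ ^ 2) ^ (-(n : ℝ) / 2) * σ ^ (-p) *
              Real.exp (-Q / (2 * σ ^ 2)) *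
              Real.sqrt (Real.pi / ((n : ℝ) / (2 * σ ^ 2)))
            = (2 * Real.pi) ^ (-((n : ℝ) - 1) / 2) * (n : ℝ) ^ (-(1 : ℝ) / 2) *
              (σ ^ (1 - (n : ℝ) - p) * Real.exp (-(Q / 2) * σ ^ (-2 : ℝ)))
          have hsq : (0 : ℝ) < Real.sqrt (Real.pi / ((n : ℝ) / (2 * σ ^ 2))) :=
            Real.sqrt_pos.mpr (by positivity)
          have hLpos : 0 < (2 * Real.pi * σ ^ 2) ^ (-(n : ℝ) / 2) * σ ^ (-p) *
              Real.exp (-Q / (2 * σ ^ 2)) *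
              Real.sqrt (Real.pi / ((n : ℝ) / (2 * σ ^ 2))) := by positivity
          have hRpos : 0 < (2 * Real.pi) ^ (-((n : ℝ) - 1) / 2) * (n : ℝ) ^ (-(1 : ℝ) / 2) *
              (σ ^ (1 - (n : ℝ) - p) * Real.exp (-(Q / 2) * σ ^ (-2 : ℝ))) := by positivity
          refine Real.log_injOn_pos (Set.mem_Ioi.2 hLpos) (Set.mem_Ioi.2 hRpos) ?_
          have l1 : Real.log ((2 * Real.pi * σ ^ 2) ^ (-(n : ℝ) / 2))
              = (-(n : ℝ) / 2) * (Real.log (2 * Real.pi) + 2 * Real.log σ) := by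
            rw [Real.log_rpow (by positivity), Real.log_mul h2π.ne' hσ2.ne', Real.log_pow]
            push_cast; ring
          have l2 : Real.log (σ ^ (-p)) = -p * Real.log σ := Real.log_rpow hσ0 _
          have l4 : Real.log (Real.sqrt (Real.pi / ((n : ℝ) / (2 * σ ^ 2))))
              = (Real.log (2 * Real.pi) + 2 * Real.log σ - Real.log n) / 2 := by
            rw [show Real.pi / ((n : ℝ) / (2 * σ ^ 2)) = 2 * Real.pi * σ ^ 2 / n by
              field_simp]
            rw [Real.log_sqrt (by positivity), Real.log_div (by positivity) hnR.ne',
              Real.log_mul h2π.ne' hσ2.ne', Real.log_pow]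
            push_cast; ring
          have r1 : Real.log ((2 * Real.pi) ^ (-((n : ℝ) - 1) / 2))
              = (-((n : ℝ) - 1) / 2) * Real.log (2 * Real.pi) :=
            Real.log_rpow h2π _
          have r2 : Real.log ((n : ℝ) ^ (-(1 : ℝ) / 2))
              = (-(1 : ℝ) / 2) * Real.log n := Real.log_rpow hnR _
          have r3 : Real.log (σ ^ (1 - (n : ℝ) - p)) = (1 - (n : ℝ) - p) * Real.log σ :=
            Real.log_rpow hσ0 _
          have r4 : Real.log (Real.exp (-(Q / 2) * σ ^ (-2 : ℝ)))
              = -(Q / 2) * (σ ^ 2)⁻¹ := by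
            rw [Real.log_exp, Real.rpow_neg hσ0.le, Real.rpow_two]
          rw [Real.log_mul (by positivity) hsq.ne',
            Real.log_mul (by positivity) (Real.exp_ne_zero _),
            Real.log_mul (by positivity) (by positivity),
            Real.log_mul (by positivity) (by positivity),
            Real.log_mul (by positivity) (Real.exp_ne_zero _),
            Real.log_mul (by positivity) (by positivity),
            l1, l2, l4, r1, r2, r3, r4, Real.log_exp]
          ring
  -- step 3: outer integral
  have outer : gaussIntensity n p y
      = ENNReal.ofReal (K * ∫ σ in Set.Ioi (0 : ℝ), h σ) := by
    rw [gaussIntensity, setLIntegral_congr_fun measurableSet_Ioi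
      inner_eq]
    rw [← ofReal_integral_eq_lintegral_ofReal (hh_int.const_mul K)]
    · rw [integral_const_mul]
    · refine (ae_restrict_iff' measurableSet_Ioi).2 (Filter.Eventually.of_forall
        fun σ hσ => ?_)
      have hσ0 : (0 : ℝ) < σ := hσ
      have hK : 0 < K := by rw [hKdef]; positivity
      have : 0 ≤ h σ := by
        rw [hhdef]
        exact mul_nonneg (Real.rpow_nonneg hσ0.le _) (Real.exp_pos _).le
      positivity
  have final : K * ∫ σ in Set.Ioi (0 : ℝ), h σ
      = Real.Gamma (((n : ℝ) + p - 2) / 2) * (2 : ℝ) ^ ((p - 3) / 2) *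
        Real.pi ^ (-((n : ℝ) - 1) / 2) * (n : ℝ) ^ (-(1 : ℝ) / 2) /
          Q ^ (((n : ℝ) + p - 2) / 2) := by
    rw [hh_val, hf_val]
    have hLpos : 0 < K * ((Q / 2) ^ (-((n : ℝ) + p - 2) / 2) * (1 / 2) *
        Real.Gamma (((n : ℝ) + p - 2) / 2)) := by
      rw [hKdef]; positivity
    have hRpos : 0 < Real.Gamma (((n : ℝ) + p - 2) / 2) * (2 : ℝ) ^ ((p - 3) / 2) *
        Real.pi ^ (-((n : ℝ) - 1) / 2) * (n : ℝ) ^ (-(1 : ℝ) / 2) /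
          Q ^ (((n : ℝ) + p - 2) / 2) := by positivity
    refine Real.log_injOn_pos (Set.mem_Ioi.2 hLpos) (Set.mem_Ioi.2 hRpos) ?_
    rw [hKdef]
    have h2π : (0 : ℝ) < 2 * Real.pi := by positivity
    have l1 : Real.log ((2 * Real.pi) ^ (-((n : ℝ) - 1) / 2))
        = (-((n : ℝ) - 1) / 2) * (Real.log 2 + Real.log Real.pi) := by
      rw [Real.log_rpow h2π, Real.log_mul two_ne_zero hπ.ne']
    have l2 : Real.log ((Q / 2) ^ (-((n : ℝ) + p - 2) / 2))
        = (-((n : ℝ) + p - 2) / 2) * (Real.log Q - Real.log 2) := by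
      rw [Real.log_rpow hQ2, Real.log_div hQ.ne' two_ne_zero]
    rw [Real.log_div (by positivity) (by positivity),
      Real.log_mul (by positivity) (by positivity),
      Real.log_mul (by positivity) (by positivity),
      Real.log_mul (by positivity) (by positivity),
      Real.log_mul (by positivity) (by positivity),
      Real.log_mul (by positivity) (by positivity),
      Real.log_mul (by positivity) (by positivity),
      Real.log_mul (by positivity) (by positivity),
      l1, l2, Real.log_rpow hnR, Real.log_rpow hπ,
      Real.log_rpow hQ, Real.log_rpow (by norm_num : (0:ℝ) < 2),
      show Real.log (1 / 2) = -Real.log 2 by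
        rw [one_div, Real.log_inv]]
    ring
  refine ⟨by rw [outer, final], by rw [outer]; exact ENNReal.ofReal_lt_top⟩
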